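/- Let l₁, l₂ ∈ ℝ, and let x₁, x₂, d, a, b, u, p : ℝ → ℝ be functions with x₁, x₂, d, p differentiable, such that for all t: x₁'(t) = x₂(t) + d(t), x₂'(t) = a(t) + b(t)·u(t), and p'(t) = -l₁·p(t) - (l₁·(l₁·x₁(t) + l₂·x₂(t)) + l₁·x₂(t) + l₂·(a(t) + b(t)·u(t))). Define d̂(t) = p(t) + l₁·x₁(t) + l₂·x₂(t). Then d̂ is differentiable with d̂'(t) = l₁·(d(t) - d̂(t)) for all t; consequently the estimation error e(t) = d(t) - d̂(t) satisfies e'(t) + l₁·e(t) = d'(t) for all t. -/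

import Mathlib

/-- Basic nonlinear disturbance observer (BNDO): with internal state p satisfying
ṗ = -l₁p - (l₁(l₁x₁ + l₂x₂) + l₁x₂ + l₂(a + bu)) and estimate
d̂ = p + l₁x₁ + l₂x₂, one gets d̂' = l₁(d - d̂), hence the error
e = d - d̂ satisfies ė + l₁e = ḋ. -/
theorem stmt_5 (l₁ l₂ : ℝ) (x₁ x₂ d a b u p : ℝ → ℝ)
    (hx₁ : Differentiable ℝ x₁) (hx₂ : Differentiable ℝ x₂)
    (hd : Differentiable ℝ d) (hp : Differentiable ℝ p)
    (hdx₁ : ∀ t, deriv x₁ t = x₂ t + d t)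
    (hdx₂ : ∀ t, deriv x₂ t = a t + b t * u t)
    (hdp : ∀ t, deriv p t = -l₁ * p t -
      (l₁ * (l₁ * x₁ t + l₂ * x₂ t) + l₁ * x₂ t + l₂ * (a t + b t * u t)))
    (dhat : ℝ → ℝ) (hdhat : ∀ t, dhat t = p t + l₁ * x₁ t + l₂ * x₂ t) :
    Differentiable ℝ dhat ∧
    (∀ t, deriv dhat t = l₁ * (d t - dhat t)) ∧
    (∀ t, deriv (fun τ => d τ - dhat τ) t + l₁ * (d t - dhat t) = deriv d t) := by
  have hfun : dhat = fun t => p t + l₁ * x₁ t + l₂ * x₂ t := funext hdhat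
  have hdiff : Differentiable ℝ dhat := by
    rw [hfun]
    exact ((hp.add (hx₁.const_mul _)).add (hx₂.const_mul _))
  have hderiv : ∀ t, deriv dhat t = l₁ * (d t - dhat t) := by
    intro t
    have h1 : deriv dhat t = deriv p t + l₁ * deriv x₁ t + l₂ * deriv x₂ t := by
      rw [hfun]
      rw [deriv_fun_add (f := fun y => p y + l₁ * x₁ y) ((hp.add ((hx₁.const_mul l₁))) t) ((hx₂.const_mul l₂) t),
        deriv_fun_add (hp t) ((hx₁.const_mul l₁) t), deriv_const_mul _ (hx₁ t),
        deriv_const_mul _ (hx₂ t)]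
    rw [h1, hdp t, hdx₁ t, hdx₂ t, hdhat t]
    ring
  refine ⟨hdiff, hderiv, fun t => ?_⟩
  have : deriv (fun τ => d τ - dhat τ) t = deriv d t - deriv dhat t :=
    deriv_sub (hd t) (hdiff t)
  rw [this, hderiv t]; ring
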